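/- Let 0 < h_min < h_max, a > 0, and let h : ℝ → ℝ be continuously differentiable and nondecreasing with h(x) = h_min for x ≤ −a and h(x) = h_max for x ≥ a. Let k > 0 and N ∈ ℕ with h_min < Nπ/k < h_max, let x* ∈ ℝ satisfy h(x*) = Nπ/k, and assume h(x) ≠ Nπ/k for every x ≠ x*. Define ξ : ℝ → ℝ by ξ(x) = ( (3/2)·∫ₓ^{x*} √(N²π²/h(t)² − k²) dt )^{2/3} for x ≤ x*, and ξ(x) = −( (3/2)·∫_{x*}^{x} √(k² − N²π²/h(t)²) dt )^{2/3} for x > x*. Then ξ is differentiable at every x ≠ x*, with ξ'(x) < 0, and satisfies the identity ξ(x)·ξ'(x)² = N²π²/h(x)² − k² for all x ≠ x*. -/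
import Mathlib


open Real intervalIntegral

/-- Away from the resonant point `x*`, the Langer variable `ξ` is differentiable with
negative derivative, and satisfies the defining identity
`ξ(x)·ξ'(x)² = N²π²/h(x)² − k²`. -/
theorem langer_variable_identity
    (hmin hmax a k : ℝ) (N : ℕ) (h : ℝ → ℝ) (xs : ℝ)
    (hmin_pos : 0 < hmin) (hminmax : hmin < hmax) (ha : 0 < a) (hk : 0 < k)
    (hsmooth : ContDiff ℝ 1 h) (hmono : Monotone h)
    (hleft : ∀ x ≤ -a, h x = hmin) (hright : ∀ x, a ≤ x → h x = hmax)
    (hres1 : hmin < N * Real.pi / k) (hres2 : N * Real.pi / k < hmax)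
    (hxs : h xs = N * Real.pi / k)
    (huniq : ∀ x, x ≠ xs → h x ≠ N * Real.pi / k)
    (ξ : ℝ → ℝ)
    (hξ : ∀ x, ξ x =
      if x ≤ xs then
        ((3 / 2) * ∫ t in x..xs,
            Real.sqrt ((N : ℝ) ^ 2 * Real.pi ^ 2 / (h t) ^ 2 - k ^ 2)) ^ ((2 : ℝ) / 3)
      else
        -(((3 / 2) * ∫ t in xs..x,
            Real.sqrt (k ^ 2 - (N : ℝ) ^ 2 * Real.pi ^ 2 / (h t) ^ 2)) ^ ((2 : ℝ) / 3))) :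
    ∀ x : ℝ, x ≠ xs →
      DifferentiableAt ℝ ξ x ∧ deriv ξ x < 0 ∧
        ξ x * (deriv ξ x) ^ 2 = (N : ℝ) ^ 2 * Real.pi ^ 2 / (h x) ^ 2 - k ^ 2 := by
  intro x hx
  have hC : Continuous h := hsmooth.continuous
  have hge : ∀ y, hmin ≤ h y := by
    intro y
    rcases le_or_gt y (-a) with hy | hy
    · exact (hleft y hy).ge
    · calc hmin = h (-a) := (hleft (-a) le_rfl).symm
        _ ≤ h y := hmono hy.le
  have hhpos : ∀ y, 0 < h y := fun y => hmin_pos.trans_le (hge y)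
  have hNk : 0 < (N : ℝ) * Real.pi / k := hmin_pos.trans hres1
  have hNpi : 0 < (N : ℝ) * Real.pi := by
    have e : (N : ℝ) * Real.pi = ((N : ℝ) * Real.pi / k) * k := by field_simp
    rw [e]; exact mul_pos hNk hk
  have hf1cont : Continuous fun t => Real.sqrt ((N : ℝ) ^ 2 * Real.pi ^ 2 / (h t) ^ 2 - k ^ 2) := by
    apply Continuous.sqrt
    exact (continuous_const.div (hC.pow 2) fun t => pow_ne_zero 2 (hhpos t).ne').sub
      continuous_const
  have hf2cont : Continuous fun t => Real.sqrt (k ^ 2 - (N : ℝ) ^ 2 * Real.pi ^ 2 / (h t) ^ 2) := by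
    apply Continuous.sqrt
    exact continuous_const.sub
      (continuous_const.div (hC.pow 2) fun t => pow_ne_zero 2 (hhpos t).ne')
  -- sign lemmas
  have hgpos_left : ∀ t, t < xs → 0 < (N : ℝ) ^ 2 * Real.pi ^ 2 / (h t) ^ 2 - k ^ 2 := by
    intro t ht
    have h1 : h t < (N : ℝ) * Real.pi / k :=
      lt_of_le_of_ne (hxs ▸ hmono ht.le) (huniq t ht.ne)
    have h2 : h t * k < (N : ℝ) * Real.pi := (lt_div_iff₀ hk).mp h1
    rw [sub_pos, lt_div_iff₀ (pow_pos (hhpos t) 2)]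
    nlinarith [hhpos t, hk, mul_pos (hhpos t) hk]
  have hgpos_right : ∀ t, xs < t → 0 < k ^ 2 - (N : ℝ) ^ 2 * Real.pi ^ 2 / (h t) ^ 2 := by
    intro t ht
    have h1 : (N : ℝ) * Real.pi / k < h t :=
      lt_of_le_of_ne (hxs ▸ hmono ht.le) fun e => huniq t ht.ne' e.symm
    have h2 : (N : ℝ) * Real.pi < h t * k := (div_lt_iff₀ hk).mp h1
    rw [sub_pos, div_lt_iff₀ (pow_pos (hhpos t) 2)]
    nlinarith [hhpos t, hk, hNpi]
  rcases hx.lt_or_gt with hlt | hgt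
  · -- x < xs
    set f1 : ℝ → ℝ := fun t => Real.sqrt ((N : ℝ) ^ 2 * Real.pi ^ 2 / (h t) ^ 2 - k ^ 2) with hf1
    set c : ℝ → ℝ := fun u => (3 / 2) * ∫ t in u..xs, f1 t with hc
    have hFpos : 0 < ∫ t in x..xs, f1 t := by
      apply intervalIntegral.intervalIntegral_pos_of_pos_on
        (hf1cont.intervalIntegrable x xs) _ hlt
      intro t ht
      exact Real.sqrt_pos.mpr (hgpos_left t ht.2)
    have hcpos : 0 < c x := by
      simpa [hc] using mul_pos (by norm_num : (0:ℝ) < 3/2) hFpos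
    have hFd : HasDerivAt (fun u => ∫ t in u..xs, f1 t) (-f1 x) x :=
      intervalIntegral.integral_hasDerivAt_left (hf1cont.intervalIntegrable x xs)
        (hf1cont.stronglyMeasurable.stronglyMeasurableAtFilter) hf1cont.continuousAt
    have hcd : HasDerivAt c ((3 / 2) * (-f1 x)) x := hFd.const_mul (3 / 2)
    have hξ0 : HasDerivAt (fun u => (c u) ^ ((2 : ℝ) / 3))
        (((2 : ℝ) / 3) * (c x) ^ ((2 : ℝ) / 3 - 1) * ((3 / 2) * (-f1 x))) x :=
      (Real.hasDerivAt_rpow_const (Or.inl hcpos.ne')).comp x hcd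
    have heq : ξ =ᶠ[nhds x] fun u => (c u) ^ ((2 : ℝ) / 3) := by
      filter_upwards [Iio_mem_nhds hlt] with u hu
      rw [hξ u, if_pos (le_of_lt hu)]
    have hξd : HasDerivAt ξ
        (((2 : ℝ) / 3) * (c x) ^ ((2 : ℝ) / 3 - 1) * ((3 / 2) * (-f1 x))) x :=
      hξ0.congr_of_eventuallyEq heq
    have hderiv : deriv ξ x = -((c x) ^ (-(1 : ℝ) / 3) * f1 x) := by
      rw [hξd.deriv]
      norm_num
      ring
    have hf1pos : 0 < f1 x := Real.sqrt_pos.mpr (hgpos_left x hlt)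
    refine ⟨hξd.differentiableAt, ?_, ?_⟩
    · rw [hderiv]
      have := Real.rpow_pos_of_pos hcpos (-(1 : ℝ) / 3)
      nlinarith
    · have hξx : ξ x = (c x) ^ ((2 : ℝ) / 3) := by rw [hξ x, if_pos hlt.le]
      have hsq : (f1 x) ^ 2 = (N : ℝ) ^ 2 * Real.pi ^ 2 / (h x) ^ 2 - k ^ 2 :=
        Real.sq_sqrt (hgpos_left x hlt).le
      have key : (c x) ^ ((2 : ℝ) / 3) * ((c x) ^ (-(1 : ℝ) / 3)) ^ 2 = 1 := by
        rw [← Real.rpow_natCast ((c x) ^ (-(1 : ℝ) / 3)) 2, ← Real.rpow_mul hcpos.le,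
          ← Real.rpow_add hcpos]
        norm_num
      calc ξ x * (deriv ξ x) ^ 2
          = ((c x) ^ ((2 : ℝ) / 3) * ((c x) ^ (-(1 : ℝ) / 3)) ^ 2) * (f1 x) ^ 2 := by
            rw [hξx, hderiv]; ring
        _ = (f1 x) ^ 2 := by rw [key, one_mul]
        _ = _ := hsq
  · -- xs < x
    set f2 : ℝ → ℝ := fun t => Real.sqrt (k ^ 2 - (N : ℝ) ^ 2 * Real.pi ^ 2 / (h t) ^ 2) with hf2
    set c : ℝ → ℝ := fun u => (3 / 2) * ∫ t in xs..u, f2 t with hc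
    have hFpos : 0 < ∫ t in xs..x, f2 t := by
      apply intervalIntegral.intervalIntegral_pos_of_pos_on
        (hf2cont.intervalIntegrable xs x) _ hgt
      intro t ht
      exact Real.sqrt_pos.mpr (hgpos_right t ht.1)
    have hcpos : 0 < c x := by
      simpa [hc] using mul_pos (by norm_num : (0:ℝ) < 3/2) hFpos
    have hFd : HasDerivAt (fun u => ∫ t in xs..u, f2 t) (f2 x) x :=
      intervalIntegral.integral_hasDerivAt_right (hf2cont.intervalIntegrable xs x)
        (hf2cont.stronglyMeasurable.stronglyMeasurableAtFilter) hf2cont.continuousAt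
    have hcd : HasDerivAt c ((3 / 2) * f2 x) x := hFd.const_mul (3 / 2)
    have hξ0 : HasDerivAt (fun u => -((c u) ^ ((2 : ℝ) / 3)))
        (-(((2 : ℝ) / 3) * (c x) ^ ((2 : ℝ) / 3 - 1) * ((3 / 2) * f2 x))) x :=
      (((Real.hasDerivAt_rpow_const (Or.inl hcpos.ne')).comp x hcd)).neg
    have heq : ξ =ᶠ[nhds x] fun u => -((c u) ^ ((2 : ℝ) / 3)) := by
      filter_upwards [Ioi_mem_nhds hgt] with u hu
      rw [hξ u, if_neg (not_le.mpr hu)]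
    have hξd : HasDerivAt ξ
        (-(((2 : ℝ) / 3) * (c x) ^ ((2 : ℝ) / 3 - 1) * ((3 / 2) * f2 x))) x :=
      hξ0.congr_of_eventuallyEq heq
    have hderiv : deriv ξ x = -((c x) ^ (-(1 : ℝ) / 3) * f2 x) := by
      rw [hξd.deriv]
      norm_num
      ring
    have hf2pos : 0 < f2 x := Real.sqrt_pos.mpr (hgpos_right x hgt)
    refine ⟨hξd.differentiableAt, ?_, ?_⟩
    · rw [hderiv]
      have := Real.rpow_pos_of_pos hcpos (-(1 : ℝ) / 3)
      nlinarith
    · have hξx : ξ x = -((c x) ^ ((2 : ℝ) / 3)) := by rw [hξ x, if_neg (not_le.mpr hgt)]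
      have hsq : (f2 x) ^ 2 = k ^ 2 - (N : ℝ) ^ 2 * Real.pi ^ 2 / (h x) ^ 2 :=
        Real.sq_sqrt (hgpos_right x hgt).le
      have key : (c x) ^ ((2 : ℝ) / 3) * ((c x) ^ (-(1 : ℝ) / 3)) ^ 2 = 1 := by
        rw [← Real.rpow_natCast ((c x) ^ (-(1 : ℝ) / 3)) 2, ← Real.rpow_mul hcpos.le,
          ← Real.rpow_add hcpos]
        norm_num
      calc ξ x * (deriv ξ x) ^ 2
          = -(((c x) ^ ((2 : ℝ) / 3) * ((c x) ^ (-(1 : ℝ) / 3)) ^ 2) * (f2 x) ^ 2) := by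
            rw [hξx, hderiv]; ring
        _ = -(f2 x) ^ 2 := by rw [key, one_mul]
        _ = _ := by rw [hsq]; ring
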